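/- Let n ≤ m be integers, let U_n, …, U_m ⊂ ℂ be nonempty compact sets and let A ∈ ΨE(U_n,…,U_m). Then N(A) = ⋃_{B ∈ M(U_n,…,U_m)} N(B). -/

import Mathlib

noncomputable section
open Filter Complex Topology
open scoped ENNReal

/-- The Hilbert space ℓ²(ℤ). -/
abbrev HZ := lp (fun _ : ℤ => ℂ) 2

/-- The standard orthonormal basis of ℓ²(ℤ). -/
def eZ (i : ℤ) : HZ := lp.single 2 i 1

/-- Matrix entry `A_{i,j} = ⟨A e_j, e_i⟩` (inner product linear in the first slot,
here written in Mathlib's convention which is conjugate-linear in the first slot). -/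
def entry (A : HZ →L[ℂ] HZ) (i j : ℤ) : ℂ := inner ℂ (eZ i) (A (eZ j))

/-- The (closed) numerical range `N(A) = clos {⟨Ax,x⟩ : ‖x‖ = 1}`. -/
def numRange (A : HZ →L[ℂ] HZ) : Set ℂ :=
  closure {z | ∃ x : HZ, ‖x‖ = 1 ∧ (inner ℂ x (A x) : ℂ) = z}

/-- The numerical abscissa `r₀(A) = max {Re z : z ∈ N(A)}`. -/
def r0 (A : HZ →L[ℂ] HZ) : ℝ := sSup (Complex.re '' numRange A)

/-- The rotated numerical abscissa `r_φ(A) = max {Re z : z ∈ N(e^{iφ}A)}`. -/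
def rphi (φ : ℝ) (A : HZ →L[ℂ] HZ) : ℝ := r0 (Complex.exp (φ * Complex.I) • A)

lemma memShift (k : ℤ) (x : HZ) : Memℓp (fun j => x (j - k)) 2 := by
  have h := lp.memℓp x
  rw [memℓp_gen_iff (by norm_num)] at h ⊢
  simpa [Function.comp_def] using ((Equiv.subRight k).summable_iff (f := fun i => ‖x i‖ ^ (2:ℝ≥0∞).toReal)).mpr h

def shiftLM (k : ℤ) : HZ →ₗ[ℂ] HZ where
  toFun x := ⟨fun j => x (j - k), memShift k x⟩
  map_add' x y := by ext j; simp [lp.coeFn_add] <;> rfl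
  map_smul' c x := by ext j; simp [lp.coeFn_smul]

lemma shift_norm (k : ℤ) (x : HZ) : ‖shiftLM k x‖ = ‖x‖ := by
  rw [lp.norm_eq_tsum_rpow (by norm_num) x, lp.norm_eq_tsum_rpow (by norm_num) (shiftLM k x)]
  congr 1
  exact (Equiv.subRight k).tsum_eq (f := fun i => ‖x i‖ ^ (2:ℝ≥0∞).toReal)

/-- The shift operator `V_k` on ℓ²(ℤ), `(V_k x)_j = x_{j-k}`. -/
def Vshift (k : ℤ) : HZ →L[ℂ] HZ :=
  LinearIsometry.toContinuousLinearMap ⟨shiftLM k, shift_norm k⟩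

/-- `B` is a limit operator of `A`: there is a sequence of integers `h` with `|h m| → ∞`
such that `V_{-h_m} A V_{h_m} → B` strongly. -/
def IsLimOp (A B : HZ →L[ℂ] HZ) : Prop :=
  ∃ h : ℕ → ℤ, Tendsto (fun m => |h m|) atTop atTop ∧
    ∀ x : HZ, Tendsto (fun m => Vshift (-(h m)) (A (Vshift (h m) x))) atTop (𝓝 (B x))

/-- The operator spectrum: the set of all limit operators of `A`. -/
def opSpec (A : HZ →L[ℂ] HZ) : Set (HZ →L[ℂ] HZ) := {B | IsLimOp A B}

/-- A band operator: only finitely many diagonals are nonzero. -/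
def IsBandOp (A : HZ →L[ℂ] HZ) : Prop :=
  ∃ N : ℕ, ∀ i j : ℤ, (N : ℤ) < |i - j| → entry A i j = 0

/-- `M(U_n, …, U_m)`: the k-th diagonal has entries in `U k` for `n ≤ k ≤ m`,
and all other diagonals vanish. -/
def Mset (n m : ℤ) (U : ℤ → Set ℂ) : Set (HZ →L[ℂ] HZ) :=
  {A | ∀ i k : ℤ, (n ≤ k → k ≤ m → entry A (i + k) i ∈ U k) ∧
      (¬(n ≤ k ∧ k ≤ m) → entry A (i + k) i = 0)}

/-- The orthogonal projection `P_{k,l}` onto `span{e_k, …, e_l}`. -/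
def projIcc (k l : ℤ) : HZ →L[ℂ] HZ :=
  ∑ i ∈ Finset.Icc k l, (innerSL ℂ (eZ i)).smulRight (eZ i)

/-- The finite matrix `b` placed in `ℓ²(ℤ)` with rows/columns at positions `k, …, k+s`. -/
def embedMat (k : ℤ) (s : ℕ) (b : Fin (s+1) → Fin (s+1) → ℂ) : HZ →L[ℂ] HZ :=
  ∑ p : Fin (s+1), ∑ q : Fin (s+1),
    b p q • (innerSL ℂ (eZ (k + (q : ℤ)))).smulRight (eZ (k + (p : ℤ)))

/-- A finite square matrix whose k-th diagonal entries lie in `U k` for `n ≤ k ≤ m`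
and whose remaining entries vanish. -/
def finPattern (n m : ℤ) (U : ℤ → Set ℂ) (s : ℕ) (b : Fin (s+1) → Fin (s+1) → ℂ) : Prop :=
  ∀ p q : Fin (s+1), (n ≤ (p : ℤ) - (q : ℤ) → (p : ℤ) - (q : ℤ) ≤ m →
      b p q ∈ U ((p : ℤ) - (q : ℤ))) ∧
    (¬(n ≤ (p : ℤ) - (q : ℤ) ∧ (p : ℤ) - (q : ℤ) ≤ m) → b p q = 0)

/-- Pseudo-ergodic operators `ΨE(U_n, …, U_m)`. -/
def PsiE (n m : ℤ) (U : ℤ → Set ℂ) : Set (HZ →L[ℂ] HZ) :=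
  {A | A ∈ Mset n m U ∧ ∀ ε > (0:ℝ), ∀ (s : ℕ) (b : Fin (s+1) → Fin (s+1) → ℂ),
    finPattern n m U s b → ∃ k : ℤ,
      ‖projIcc k (k + s) ∘L A ∘L projIcc k (k + s) - embedMat k s b‖ ≤ ε}

/-- The essential spectrum: the set of `λ` such that `A - λI` is not Fredholm. -/
def essSpec (A : HZ →L[ℂ] HZ) : Set ℂ :=
  {lam | ¬(FiniteDimensional ℂ (LinearMap.ker ((A - lam • (1 : HZ →L[ℂ] HZ) : HZ →L[ℂ] HZ) : HZ →ₗ[ℂ] HZ)) ∧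
      FiniteDimensional ℂ ((LinearMap.range ((A - lam • (1 : HZ →L[ℂ] HZ) : HZ →L[ℂ] HZ) : HZ →ₗ[ℂ] HZ))ᗮ))}

/-- The Hilbert space ℓ²(ℕ). -/
abbrev HN := lp (fun _ : ℕ => ℂ) 2

def eN (i : ℕ) : HN := lp.single 2 i 1

def entryN (A : HN →L[ℂ] HN) (i j : ℕ) : ℂ := inner ℂ (eN i) (A (eN j))

def numRangeN (A : HN →L[ℂ] HN) : Set ℂ :=
  closure {z | ∃ x : HN, ‖x‖ = 1 ∧ (inner ℂ x (A x) : ℂ) = z}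

def r0N (A : HN →L[ℂ] HN) : ℝ := sSup (Complex.re '' numRangeN A)


section Aux

lemma inner_eZ_left (i : ℤ) (x : HZ) : (inner ℂ (eZ i) x : ℂ) = x i := by
  simp [eZ, lp.inner_single_left]

lemma inner_eZ_right (i : ℤ) (x : HZ) : (inner ℂ x (eZ i) : ℂ) = starRingEnd ℂ (x i) := by
  simp [eZ, lp.inner_single_right]

lemma eZ_apply (i j : ℤ) : (eZ i) j = if j = i then 1 else 0 := by
  rw [eZ, lp.single_apply]
  split_ifs with h <;> simp [h]

lemma inner_eq_sum (S : Finset ℤ) (x : HZ) (hx : ∀ j ∉ S, x j = 0) (v : HZ) :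
    (inner ℂ x v : ℂ) = ∑ i ∈ S, starRingEnd ℂ (x i) * v i := by
  rw [lp.inner_eq_tsum]
  rw [tsum_eq_sum (s := S)]
  · exact Finset.sum_congr rfl fun i _ => by rw [RCLike.inner_apply]; ring
  · intro j hj; simp [hx j hj]

lemma sum_fin_eq_sum_Icc {M : Type*} [AddCommMonoid M] (k : ℤ) (s : ℕ) (f : ℤ → M) :
    ∑ p : Fin (s+1), f (k + (p:ℤ)) = ∑ i ∈ Finset.Icc k (k+s), f i := by
  refine Finset.sum_bij' (fun p _ => k + (p:ℤ))
      (fun a ha => (⟨(a-k).toNat, by simp only [Finset.mem_Icc] at ha; omega⟩ : Fin (s+1)))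
      ?_ ?_ ?_ ?_ ?_
  · intro a _; simp only [Finset.mem_Icc]; omega
  · intro a _; exact Finset.mem_univ _
  · intro a _; ext; simp
  · intro a ha; simp only [Finset.mem_Icc] at ha; simp; omega
  · intro a _; rfl

lemma sum_smul_eZ_apply (S : Finset ℤ) (g : ℤ → ℂ) (j : ℤ) :
    (∑ i ∈ S, g i • eZ i) j = if j ∈ S then g j else 0 := by
  rw [lp.coeFn_sum, Finset.sum_apply]
  by_cases hj : j ∈ S
  · rw [Finset.sum_eq_single j]
    · simp [lp.coeFn_smul, eZ_apply, hj]
    · intro i _ hij; simp [lp.coeFn_smul, eZ_apply, Ne.symm hij]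
    · intro h; exact absurd hj h
  · rw [if_neg hj, Finset.sum_eq_zero]
    intro i hi
    have : j ≠ i := fun h => hj (h ▸ hi)
    simp [lp.coeFn_smul, eZ_apply, this]

lemma eq_sum_window (S : Finset ℤ) (x : HZ) (hx : ∀ j ∉ S, x j = 0) :
    x = ∑ i ∈ S, x i • eZ i := by
  ext j
  rw [sum_smul_eZ_apply]
  by_cases hj : j ∈ S
  · simp [hj]
  · simp [hj, hx j hj]

lemma Vshift_apply (t : ℤ) (x : HZ) (j : ℤ) : (Vshift t x) j = x (j - t) := rfl

lemma Vshift_norm (t : ℤ) (x : HZ) : ‖Vshift t x‖ = ‖x‖ := shift_norm t x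

lemma projIcc_apply (k l : ℤ) (x : HZ) :
    projIcc k l x = ∑ i ∈ Finset.Icc k l, (x i) • eZ i := by
  simp only [projIcc, ContinuousLinearMap.sum_apply, ContinuousLinearMap.smulRight_apply,
    innerSL_apply_apply, inner_eZ_left]

lemma projIcc_fix (k l : ℤ) (x : HZ) (hx : ∀ j ∉ Finset.Icc k l, x j = 0) :
    projIcc k l x = x := by
  rw [projIcc_apply]
  exact (eq_sum_window _ x hx).symm

lemma projIcc_symm (k l : ℤ) (u v : HZ) :
    (inner ℂ u (projIcc k l v) : ℂ) = inner ℂ (projIcc k l u) v := by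
  rw [projIcc_apply, projIcc_apply, inner_sum, sum_inner]
  refine Finset.sum_congr rfl fun i _ => ?_
  rw [inner_smul_right, inner_smul_left, inner_eZ_right, inner_eZ_left]
  ring

lemma quadform_eq_sum (k : ℤ) (s : ℕ) (x : HZ) (hx : ∀ j ∉ Finset.Icc k (k+s), x j = 0)
    (B : HZ →L[ℂ] HZ) :
    (inner ℂ x (B x) : ℂ) = ∑ p : Fin (s+1), ∑ q : Fin (s+1),
      starRingEnd ℂ (x (k + (p:ℤ))) * entry B (k + (p:ℤ)) (k + (q:ℤ)) * x (k + (q:ℤ)) := by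
  have hrep : B x = ∑ q ∈ Finset.Icc k (k+s), x q • B (eZ q) := by
    conv_lhs => rw [eq_sum_window _ x hx]
    rw [map_sum]
    exact Finset.sum_congr rfl fun q _ => by rw [map_smul]
  have hcoord : ∀ p : ℤ, (B x) p = ∑ q ∈ Finset.Icc k (k+s), x q * entry B p (q:ℤ) := by
    intro p
    rw [← inner_eZ_left p (B x), hrep, inner_sum]
    refine Finset.sum_congr rfl fun q _ => ?_
    rw [inner_smul_right]; rfl
  rw [inner_eq_sum (Finset.Icc k (k+s)) x hx,
    ← sum_fin_eq_sum_Icc k s (fun p => starRingEnd ℂ (x p) * (B x) p)]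
  refine Finset.sum_congr rfl fun p _ => ?_
  rw [hcoord, Finset.mul_sum,
    ← sum_fin_eq_sum_Icc k s (fun q => starRingEnd ℂ (x (k + (p:ℤ))) * (x q * entry B (k + (p:ℤ)) q))]
  refine Finset.sum_congr rfl fun q _ => ?_
  ring

lemma quadform_embed (k : ℤ) (s : ℕ) (b : Fin (s+1) → Fin (s+1) → ℂ) (y : HZ) :
    (inner ℂ y (embedMat k s b y) : ℂ) = ∑ p : Fin (s+1), ∑ q : Fin (s+1),
      starRingEnd ℂ (y (k + (p:ℤ))) * b p q * y (k + (q:ℤ)) := by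
  simp only [embedMat, ContinuousLinearMap.sum_apply, inner_sum,
    ContinuousLinearMap.smul_apply, ContinuousLinearMap.smulRight_apply, innerSL_apply_apply,
    inner_eZ_left, inner_smul_right, inner_eZ_right]
  refine Finset.sum_congr rfl fun p _ => Finset.sum_congr rfl fun q _ => ?_
  ring

end Aux

set_option maxHeartbeats 1000000 in
set_option synthInstance.maxHeartbeats 400000 in
/-- For pseudo-ergodic `A`, `N(A) = ⋃_{B ∈ M(U_n,…,U_m)} N(B)`. -/
theorem numRange_eq_iUnion_of_pseudoErgodic
    (n m : ℤ) (hnm : n ≤ m) (U : ℤ → Set ℂ)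
    (hU : ∀ k : ℤ, n ≤ k → k ≤ m → (U k).Nonempty ∧ IsCompact (U k))
    (A : HZ →L[ℂ] HZ) (hA : A ∈ PsiE n m U) :
    numRange A = ⋃ B ∈ Mset n m U, numRange B := by
  apply Set.Subset.antisymm
  · exact Set.subset_iUnion₂ (s := fun B _ => numRange B) A hA.1
  · refine Set.iUnion₂_subset fun B hB => ?_
    refine closure_minimal ?_ isClosed_closure
    rintro z ⟨x, hx1, hxz⟩
    rw [numRange, Metric.mem_closure_iff]
    intro ε hε
    set δ : ℝ := min (ε / (8 * (‖B‖ + 1))) (1/2) with hδdef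
    have hBpos : (0:ℝ) < ‖B‖ + 1 := by positivity
    have hδ : 0 < δ := by
      apply lt_min
      · positivity
      · norm_num
    have hδ2 : δ ≤ 1/2 := min_le_right _ _
    have hδ1 : δ ≤ ε / (8 * (‖B‖ + 1)) := min_le_left _ _
    -- finitely supported approximation
    have hsum : HasSum (fun i : ℤ => x i • eZ i) x := by
      have h := lp.hasSum_single (E := fun _ : ℤ => ℂ) (by norm_num : (2:ℝ≥0∞) ≠ ⊤) x
      refine h.congr_fun fun i => ?_
      rw [eZ, ← lp.single_smul]
      norm_num
    obtain ⟨S, hS⟩ : ∃ S : Finset ℤ, dist (∑ i ∈ S, x i • eZ i) x < δ := by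
      have := Metric.tendsto_nhds.mp hsum δ hδ
      exact this.exists
    set x'' : HZ := ∑ i ∈ S, x i • eZ i with hx''def
    have hxx'' : ‖x - x''‖ < δ := by
      rw [← dist_eq_norm, dist_comm]; exact hS
    have hx''norm : (1:ℝ)/2 < ‖x''‖ := by
      have h1 : ‖x‖ - ‖x - x''‖ ≤ ‖x''‖ := by
        have := norm_sub_norm_le x x''
        linarith [this]
      rw [hx1] at h1; linarith
    have hx''pos : (0:ℝ) < ‖x''‖ := by linarith
    set x' : HZ := (‖x''‖:ℂ)⁻¹ • x'' with hx'def
    have hx'norm : ‖x'‖ = 1 := by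
      rw [hx'def, norm_smul]
      simp only [norm_inv, Complex.norm_real, norm_norm]
      field_simp
    have hxx' : ‖x - x'‖ < 2 * δ := by
      have h1 : x'' - x' = (1 - (‖x''‖:ℂ)⁻¹) • x'' := by
        rw [hx'def, sub_smul, one_smul]
      have h2 : ‖x'' - x'‖ = |‖x''‖ - 1| := by
        rw [h1, norm_smul]
        have h3 : (1 - (‖x''‖:ℂ)⁻¹) = ((1 - ‖x''‖⁻¹ : ℝ) : ℂ) := by push_cast; ring
        rw [h3, Complex.norm_real, Real.norm_eq_abs]
        nth_rewrite 2 [← abs_of_pos hx''pos]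
        rw [← abs_mul, sub_mul, one_mul, inv_mul_cancel₀ hx''pos.ne']
      have h4 : |‖x''‖ - 1| ≤ ‖x'' - x‖ := by
        have := abs_norm_sub_norm_le x'' x
        rwa [hx1] at this
      have h5 : ‖x'' - x‖ < δ := by rwa [norm_sub_rev] at hxx''
      have h6 : ‖x - x'‖ ≤ ‖x - x''‖ + ‖x'' - x'‖ := by
        have : x - x' = (x - x'') + (x'' - x') := by abel
        rw [this]; exact norm_add_le _ _
      have h7 : ‖x'' - x'‖ < δ := by rw [h2]; exact lt_of_le_of_lt h4 h5
      linarith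
    -- support window
    obtain ⟨k, s, hks⟩ : ∃ (k : ℤ) (s : ℕ), S ⊆ Finset.Icc k (k + (s:ℤ)) := by
      rcases S.eq_empty_or_nonempty with rfl | hS0
      · exact ⟨0, 0, by simp⟩
      · refine ⟨S.min' hS0, (S.max' hS0 - S.min' hS0).toNat, fun a ha => ?_⟩
        simp only [Finset.mem_Icc]
        have h1 := S.min'_le a ha
        have h2 := S.le_max' a ha
        have h3 := S.min'_le _ (S.max'_mem hS0)
        omega
    have hx'supp : ∀ j ∉ Finset.Icc k (k + (s:ℤ)), x' j = 0 := by
      intro j hj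
      have hjS : j ∉ S := fun h => hj (hks h)
      have : x'' j = 0 := by
        rw [hx''def, sum_smul_eZ_apply, if_neg hjS]
      rw [hx'def, lp.coeFn_smul, Pi.smul_apply, this, smul_zero]
    -- the finite pattern
    set b : Fin (s+1) → Fin (s+1) → ℂ := fun p q => entry B (k + (p:ℤ)) (k + (q:ℤ)) with hbdef
    have hpat : finPattern n m U s b := by
      intro p q
      have h := hB (k + (q:ℤ)) ((p:ℤ) - (q:ℤ))
      have heq : k + (q:ℤ) + ((p:ℤ) - (q:ℤ)) = k + (p:ℤ) := by ring
      constructor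
      · intro h1 h2
        have := h.1 h1 h2
        rwa [heq] at this
      · intro h1
        have := h.2 h1
        rwa [heq] at this
    -- pseudo-ergodicity
    obtain ⟨k', hk'⟩ := hA.2 (ε/4) (by positivity) s b hpat
    set y : HZ := Vshift (k' - k) x' with hydef
    have hy_coord : ∀ p : ℤ, y (k' + p) = x' (k + p) := by
      intro p
      rw [hydef, Vshift_apply, show k' + p - (k' - k) = k + p by ring]
    have hy_supp : ∀ j ∉ Finset.Icc k' (k' + (s:ℤ)), y j = 0 := by
      intro j hj
      rw [hydef, Vshift_apply]
      apply hx'supp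
      simp only [Finset.mem_Icc] at hj ⊢
      omega
    have hy_norm : ‖y‖ = 1 := by rw [hydef, Vshift_norm]; exact hx'norm
    -- quadratic forms match
    have hqf : (inner ℂ x' (B x') : ℂ) = inner ℂ y (embedMat k' s b y) := by
      rw [quadform_eq_sum k s x' hx'supp B, quadform_embed]
      refine Finset.sum_congr rfl fun p _ => Finset.sum_congr rfl fun q _ => ?_
      rw [hy_coord, hy_coord, hbdef]
    -- projection identity
    have hproj : (inner ℂ y ((projIcc k' (k' + (s:ℤ)) ∘L A ∘L projIcc k' (k' + (s:ℤ))) y) : ℂ)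
        = inner ℂ y (A y) := by
      rw [ContinuousLinearMap.comp_apply, ContinuousLinearMap.comp_apply,
        projIcc_fix _ _ y hy_supp, projIcc_symm, projIcc_fix _ _ y hy_supp]
    -- error from pseudo-ergodicity
    have herr : ‖(inner ℂ y (A y) : ℂ) - inner ℂ x' (B x')‖ ≤ ε/4 := by
      rw [hqf, ← hproj]
      have : (inner ℂ y ((projIcc k' (k' + (s:ℤ)) ∘L A ∘L projIcc k' (k' + (s:ℤ))) y) : ℂ)
          - inner ℂ y (embedMat k' s b y)
          = inner ℂ y ((projIcc k' (k' + (s:ℤ)) ∘L A ∘L projIcc k' (k' + (s:ℤ)) - embedMat k' s b) y) := by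
        rw [ContinuousLinearMap.sub_apply, inner_sub_right]
      rw [this]
      calc ‖(inner ℂ y ((projIcc k' (k' + (s:ℤ)) ∘L A ∘L projIcc k' (k' + (s:ℤ)) - embedMat k' s b) y) : ℂ)‖
          ≤ ‖y‖ * ‖(projIcc k' (k' + (s:ℤ)) ∘L A ∘L projIcc k' (k' + (s:ℤ)) - embedMat k' s b) y‖ :=
            norm_inner_le_norm _ _
        _ ≤ ‖y‖ * (‖projIcc k' (k' + (s:ℤ)) ∘L A ∘L projIcc k' (k' + (s:ℤ)) - embedMat k' s b‖ * ‖y‖) :=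
            mul_le_mul_of_nonneg_left (ContinuousLinearMap.le_opNorm _ _) (norm_nonneg _)
        _ ≤ ε/4 := by rw [hy_norm, one_mul, mul_one]; exact hk'
    -- continuity of quadratic form
    have hcont : ‖(inner ℂ x (B x) : ℂ) - inner ℂ x' (B x')‖ ≤ 2 * ‖B‖ * ‖x - x'‖ := by
      have hid : (inner ℂ x (B x) : ℂ) - inner ℂ x' (B x')
          = inner ℂ (x - x') (B x) + inner ℂ x' (B (x - x')) := by
        rw [map_sub, inner_sub_left, inner_sub_right]; ring
      rw [hid]
      calc ‖(inner ℂ (x - x') (B x) : ℂ) + inner ℂ x' (B (x - x'))‖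
          ≤ ‖(inner ℂ (x - x') (B x) : ℂ)‖ + ‖(inner ℂ x' (B (x - x')) : ℂ)‖ := norm_add_le _ _
        _ ≤ ‖x - x'‖ * ‖B x‖ + ‖x'‖ * ‖B (x - x')‖ :=
            add_le_add (norm_inner_le_norm _ _) (norm_inner_le_norm _ _)
        _ ≤ ‖x - x'‖ * (‖B‖ * ‖x‖) + ‖x'‖ * (‖B‖ * ‖x - x'‖) :=
            add_le_add (mul_le_mul_of_nonneg_left (ContinuousLinearMap.le_opNorm _ _) (norm_nonneg _))
              (mul_le_mul_of_nonneg_left (ContinuousLinearMap.le_opNorm _ _) (norm_nonneg _))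
        _ = 2 * ‖B‖ * ‖x - x'‖ := by rw [hx1, hx'norm]; ring
    refine ⟨inner ℂ y (A y), ⟨y, hy_norm, rfl⟩, ?_⟩
    rw [Complex.dist_eq, ← hxz]
    have hB0 : (0:ℝ) ≤ ‖B‖ := norm_nonneg _
    have hxx'n : (0:ℝ) ≤ ‖x - x'‖ := norm_nonneg _
    have h1 : ‖(inner ℂ x (B x) : ℂ) - inner ℂ x' (B x')‖ ≤ ε/2 := by
      have hstep : 2 * ‖B‖ * ‖x - x'‖ ≤ 2 * (‖B‖+1) * (2*δ) := by
        calc 2 * ‖B‖ * ‖x - x'‖ ≤ 2 * ‖B‖ * (2*δ) :=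
              mul_le_mul_of_nonneg_left hxx'.le (by positivity)
          _ ≤ 2 * (‖B‖+1) * (2*δ) := by
              apply mul_le_mul_of_nonneg_right _ (by positivity)
              linarith
      have h2 : 2 * (‖B‖+1) * (2*δ) ≤ ε/2 := by
        have h3 := mul_le_mul_of_nonneg_left hδ1 (by positivity : (0:ℝ) ≤ 4*(‖B‖+1))
        calc 2 * (‖B‖+1) * (2*δ) = 4*(‖B‖+1)*δ := by ring
          _ ≤ 4*(‖B‖+1) * (ε / (8 * (‖B‖ + 1))) := h3
          _ = ε/2 := by field_simp; ring
      calc ‖(inner ℂ x (B x) : ℂ) - inner ℂ x' (B x')‖ ≤ 2 * ‖B‖ * ‖x - x'‖ := hcont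
        _ ≤ 2 * (‖B‖+1) * (2*δ) := hstep
        _ ≤ ε/2 := h2
    calc ‖(inner ℂ x (B x) : ℂ) - inner ℂ y (A y)‖
        = ‖((inner ℂ x (B x) : ℂ) - inner ℂ x' (B x')) + ((inner ℂ x' (B x') : ℂ) - inner ℂ y (A y))‖ := by
          rw [show ((inner ℂ x (B x) : ℂ) - inner ℂ x' (B x')) + ((inner ℂ x' (B x') : ℂ) - inner ℂ y (A y))
            = (inner ℂ x (B x) : ℂ) - inner ℂ y (A y) by ring]
      _ ≤ ‖(inner ℂ x (B x) : ℂ) - inner ℂ x' (B x')‖ + ‖(inner ℂ x' (B x') : ℂ) - inner ℂ y (A y)‖ :=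
          norm_add_le _ _
      _ ≤ ε/2 + ε/4 := by
          refine add_le_add h1 ?_
          rw [← norm_neg]
          simpa [neg_sub] using herr
      _ < ε := by linarith
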